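/- arXiv:1404.3389 — 2 statements merged into one kernel-verified Lean document; each statement's English description precedes it below -/
import Mathlib

section
/- If 0 < r < 1 and x* > 0 satisfies -r*x* + tanh(x*) = 0, then f'(x*) = 1 - r - (r*x*)² < 0, i.e., the nonzero steady states ±x* are stable. -/
lemma hasDerivAt_tanh' (x : ℝ) :
    HasDerivAt Real.tanh (1 / Real.cosh x ^ 2) x := by
  have hc : Real.cosh x ≠ 0 := (Real.cosh_pos x).ne'
  have h := (Real.hasDerivAt_sinh x).div (Real.hasDerivAt_cosh x) hc
  have heq : (Real.cosh x * Real.cosh x - Real.sinh x * Real.sinh x) / Real.cosh x ^ 2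
      = 1 / Real.cosh x ^ 2 := by
    have := Real.cosh_sq_sub_sinh_sq x
    ring_nf
    ring_nf at this
    nlinarith [this]
  have h2 : HasDerivAt (fun y => Real.sinh y / Real.cosh y) (1 / Real.cosh x ^ 2) x := by
    rw [← heq]; exact h
  have : (fun y => Real.sinh y / Real.cosh y) = Real.tanh := by
    funext y; rw [Real.tanh_eq_sinh_div_cosh]
  rwa [this] at h2

theorem nonzero_steady_state_stable (r xs : ℝ) (hr0 : 0 < r) (hr1 : r < 1)
    (hxs : 0 < xs) (hss : -r * xs + Real.tanh xs = 0) :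
    deriv (fun x : ℝ => -r * x + Real.tanh x) xs = 1 - r - (r * xs) ^ 2 ∧
      1 - r - (r * xs) ^ 2 < 0 := by
  have hc : (0:ℝ) < Real.cosh xs := Real.cosh_pos xs
  have htanh : Real.tanh xs = r * xs := by linarith
  have hsd : Real.sinh xs / Real.cosh xs = r * xs := by
    rw [← Real.tanh_eq_sinh_div_cosh]; exact htanh
  have hsinh : Real.sinh xs = r * xs * Real.cosh xs := by
    field_simp at hsd; linarith
  have hcs : Real.cosh xs ^ 2 - Real.sinh xs ^ 2 = 1 := Real.cosh_sq_sub_sinh_sq xs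
  -- 1/cosh² = 1 - (r xs)²
  have key : 1 / Real.cosh xs ^ 2 = 1 - (r * xs) ^ 2 := by
    have hc2 : Real.cosh xs ^ 2 ≠ 0 := by positivity
    have h3 : Real.cosh xs ^ 2 - (r * xs * Real.cosh xs) ^ 2 = 1 := by
      rw [← hsinh]; exact hcs
    field_simp
    nlinarith [h3]
  have hd : HasDerivAt (fun x : ℝ => -r * x + Real.tanh x) (1 - r - (r * xs) ^ 2) xs := by
    have := ((hasDerivAt_id xs).const_mul (-r)).add (hasDerivAt_tanh' xs)
    rw [key] at this
    exact this.congr_deriv (by ring)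
  refine ⟨hd.deriv, ?_⟩
  -- sinh xs > xs and cosh ≥ 1 ⇒ sinh·cosh > xs ⇒ sech² < r
  have hs : xs < Real.sinh xs := Real.self_lt_sinh_iff.mpr hxs
  have h1 : (1:ℝ) ≤ Real.cosh xs := Real.one_le_cosh xs
  -- r * xs * cosh² = sinh * cosh ≥ sinh > xs
  have : xs < r * xs * Real.cosh xs ^ 2 := by nlinarith [Real.sinh_pos_iff.mpr hxs]
  -- so 1 - r < tanh² = (r xs)² : 1 - (r xs)² = 1/cosh² < r
  have hlt : 1 - (r * xs) ^ 2 < r := by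
    rw [← key]
    rw [div_lt_iff₀ (by positivity)]
    nlinarith
  linarith
end

section
/- If h₂(m(t)) ≥ δ > 0 for all t and h(x) ≤ L x for x ≥ 0 with L > 0, then the solution of x'(t) = −h(x(t)) + h₂(m(t)) with x(0) = x₀ ≥ 0 satisfies x(t) ≥ min(x₀, δ/L) for all t ≥ 0. -/
lemma stays_above_aux (h : ℝ → ℝ) (h2m : ℝ → ℝ) (δ L : ℝ)
    (hδ : 0 < δ) (hL : 0 < L)
    (hsoc : ∀ t : ℝ, δ ≤ h2m t)
    (hlin : ∀ x : ℝ, 0 ≤ x → h x ≤ L * x)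
    (x : ℝ → ℝ)
    (hx : ∀ t : ℝ, HasDerivAt x (-h (x t) + h2m t) t)
    (b : ℝ) (hb0 : 0 ≤ b) (hbδ : b < δ / L) (hbx0 : b ≤ x 0) :
    ∀ t : ℝ, 0 ≤ t → b ≤ x t := by
  have hcont : Continuous x := by
    rw [continuous_iff_continuousAt]
    exact fun t => (hx t).continuousAt
  intro t ht
  by_contra hlt
  push_neg at hlt
  set S : Set ℝ := Set.Icc 0 t ∩ x ⁻¹' Set.Ici b with hS
  have hSne : S.Nonempty := ⟨0, ⟨le_refl 0, ht⟩, hbx0⟩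
  have hSbdd : BddAbove S := ⟨t, fun s hs => hs.1.2⟩
  have hSclosed : IsClosed S :=
    (isClosed_Icc).inter (isClosed_Ici.preimage hcont)
  set t₁ := sSup S with ht₁def
  have ht₁mem : t₁ ∈ S := hSclosed.csSup_mem hSne hSbdd
  have ht₁le : t₁ ≤ t := ht₁mem.1.2
  have ht₁ne : t₁ ≠ t := fun he => absurd ht₁mem.2 (by simp [he, not_le.mpr hlt])
  have ht₁lt : t₁ < t := lt_of_le_of_ne ht₁le ht₁ne
  have hafter : ∀ s, t₁ < s → s ≤ t → x s < b := by
    intro s hs1 hs2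
    by_contra hxs
    push_neg at hxs
    have : s ∈ S := ⟨⟨le_trans ht₁mem.1.1 hs1.le, hs2⟩, hxs⟩
    exact absurd (le_csSup hSbdd this) (not_le.mpr hs1)
  -- x t₁ = b
  have hxt₁ge : b ≤ x t₁ := ht₁mem.2
  have hxt₁le : x t₁ ≤ b := by
    have hlim : Filter.Tendsto x (nhdsWithin t₁ (Set.Ioi t₁)) (nhds (x t₁)) :=
      (hcont.continuousAt).continuousWithinAt.tendsto
    have hev : ∀ᶠ s in nhdsWithin t₁ (Set.Ioi t₁), x s ≤ b := by
      filter_upwards [Ioo_mem_nhdsGT_of_mem (Set.left_mem_Ico.mpr ht₁lt)] with s hs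
      exact (hafter s hs.1 hs.2.le).le
    exact le_of_tendsto hlim hev
  have hxt₁ : x t₁ = b := le_antisymm hxt₁le hxt₁ge
  -- derivative at t₁ is positive
  have hdpos : 0 < -h (x t₁) + h2m t₁ := by
    have h1 : h (x t₁) ≤ L * b := by rw [hxt₁]; exact hlin b hb0
    have h2 : L * b < δ := by
      have := (mul_lt_mul_iff_right₀ hL).mpr hbδ
      rwa [mul_div_cancel₀ _ (ne_of_gt hL)] at this
    linarith [hsoc t₁]
  have hslope := hasDerivAt_iff_tendsto_slope.mp (hx t₁)
  have hslope' : Filter.Tendsto (slope x t₁) (nhdsWithin t₁ (Set.Ioi t₁))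
      (nhds (-h (x t₁) + h2m t₁)) :=
    hslope.mono_left (nhdsWithin_mono t₁ (fun s hs => ne_of_gt hs))
  have hev1 : ∀ᶠ s in nhdsWithin t₁ (Set.Ioi t₁), 0 < slope x t₁ s :=
    hslope'.eventually (eventually_gt_nhds hdpos)
  have hev2 : ∀ᶠ s in nhdsWithin t₁ (Set.Ioi t₁), s ∈ Set.Ioo t₁ t :=
    Ioo_mem_nhdsGT_of_mem (Set.left_mem_Ico.mpr ht₁lt)
  obtain ⟨s, hs1, hs2⟩ := (hev1.and hev2).exists
  have hspos : 0 < s - t₁ := sub_pos.mpr hs2.1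
  have : 0 < (x s - x t₁) / (s - t₁) := by
    simpa [slope_def_field, div_eq_iff] using hs1
  have hxs : x t₁ < x s := by
    have := mul_pos this hspos
    rw [div_mul_cancel₀ _ (ne_of_gt hspos)] at this
    linarith
  have := hafter s hs2.1 hs2.2.le
  rw [hxt₁] at hxs
  linarith

theorem feeling_stays_high (h : ℝ → ℝ) (h2m : ℝ → ℝ) (δ L x₀ : ℝ)
    (hδ : 0 < δ) (hL : 0 < L)
    (hsoc : ∀ t : ℝ, δ ≤ h2m t)
    (hlin : ∀ x : ℝ, 0 ≤ x → h x ≤ L * x)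
    (x : ℝ → ℝ)
    (hx : ∀ t : ℝ, HasDerivAt x (-h (x t) + h2m t) t)
    (hx0 : x 0 = x₀) (hx0pos : 0 ≤ x₀) :
    ∀ t : ℝ, 0 ≤ t → min x₀ (δ / L) ≤ x t := by
  intro t ht
  set c := min x₀ (δ / L) with hc
  by_contra hlt
  push_neg at hlt
  have hδL : 0 < δ / L := div_pos hδ hL
  have hc0 : 0 ≤ c := le_min hx0pos hδL.le
  have hcδ : c ≤ δ / L := min_le_right _ _
  have hcx0 : c ≤ x₀ := min_le_left _ _
  set b := max 0 ((x t + c) / 2) with hb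
  have hmidc : (x t + c) / 2 < c := by linarith
  have hb0 : 0 ≤ b := le_max_left _ _
  have hbc : b ≤ c := max_le hc0 hmidc.le
  have hbδ : b < δ / L := max_lt hδL (lt_of_lt_of_le hmidc hcδ)
  have hbx0 : b ≤ x 0 := by rw [hx0]; exact le_trans hbc hcx0
  have := stays_above_aux h h2m δ L hδ hL hsoc hlin x hx b hb0 hbδ hbx0 t ht
  have hxb : x t < b := lt_of_lt_of_le (by linarith) (le_max_right _ _)
  linarith
end
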